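/- For the Top-k operator, for all x ∈ ℝ^d it holds that (k/d)·‖x‖² ≤ ‖Top_k(x)‖² and moreover ‖Top_k(x)‖² = ⟨Top_k(x), x⟩ ≤ ‖x‖². -/
import Mathlib


open scoped RealInnerProductSpace

/-- Top-k lower/upper bounds: `(k/d)‖x‖² ≤ ‖Top_k(x)‖² = ⟨Top_k(x), x⟩ ≤ ‖x‖²`. -/
theorem topk_bounds (d k : ℕ) (hk : 1 ≤ k) (hkd : k ≤ d)
    (x y : EuclideanSpace ℝ (Fin d)) (S : Finset (Fin d)) (hS : S.card = k)
    (hlarge : ∀ i ∈ S, ∀ j ∉ S, |x j| ≤ |x i|)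
    (hy : ∀ i, y i = if i ∈ S then x i else 0) :
    ((k : ℝ) / d) * ‖x‖ ^ 2 ≤ ‖y‖ ^ 2 ∧ ‖y‖ ^ 2 = ⟪y, x⟫ ∧ ⟪y, x⟫ ≤ ‖x‖ ^ 2 := by
  have hd : 0 < (d : ℝ) := by exact_mod_cast lt_of_lt_of_le hk hkd
  have hnx : ‖x‖ ^ 2 = ∑ i, x i ^ 2 := by
    rw [← real_inner_self_eq_norm_sq, PiLp.inner_apply]
    simp [RCLike.inner_apply, sq]
  have hny : ‖y‖ ^ 2 = ∑ i ∈ S, x i ^ 2 := by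
    rw [← real_inner_self_eq_norm_sq, PiLp.inner_apply]
    simp only [RCLike.inner_apply, hy, starRingEnd_apply, star_trivial]
    rw [Finset.sum_congr rfl (fun i (_ : i ∈ Finset.univ) => show _ = if i ∈ S then x i ^ 2 else 0 by
      by_cases h : i ∈ S <;> simp [h, sq])]
    rw [Finset.sum_ite_mem, Finset.univ_inter]
  have hinner : ⟪y, x⟫ = ∑ i ∈ S, x i ^ 2 := by
    rw [PiLp.inner_apply]
    simp only [RCLike.inner_apply, hy, starRingEnd_apply, star_trivial]
    rw [Finset.sum_congr rfl (fun i (_ : i ∈ Finset.univ) => show _ = if i ∈ S then x i ^ 2 else 0 by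
      by_cases h : i ∈ S <;> simp [h, sq])]
    rw [Finset.sum_ite_mem, Finset.univ_inter]
  have hSc : Sᶜ.card = d - k := by
    rw [Finset.card_compl, hS, Fintype.card_fin]
  have key : (k : ℝ) * ∑ i, x i ^ 2 ≤ (d : ℝ) * ∑ i ∈ S, x i ^ 2 := by
    have hsplit : ∑ i, x i ^ 2 = (∑ i ∈ S, x i ^ 2) + ∑ i ∈ Sᶜ, x i ^ 2 := by
      rw [Finset.sum_add_sum_compl]
    have h1 : (k : ℝ) * ∑ j ∈ Sᶜ, x j ^ 2 ≤ ((d : ℝ) - k) * ∑ i ∈ S, x i ^ 2 := by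
      have : ∑ j ∈ Sᶜ, ∑ i ∈ S, x j ^ 2 ≤ ∑ j ∈ Sᶜ, ∑ i ∈ S, x i ^ 2 := by
        apply Finset.sum_le_sum
        intro j hj
        apply Finset.sum_le_sum
        intro i hi
        have := hlarge i hi j (Finset.mem_compl.mp hj)
        calc x j ^ 2 = |x j| ^ 2 := (sq_abs _).symm
          _ ≤ |x i| ^ 2 := pow_le_pow_left₀ (abs_nonneg _) this 2
          _ = x i ^ 2 := sq_abs _
      calc (k : ℝ) * ∑ j ∈ Sᶜ, x j ^ 2 = ∑ j ∈ Sᶜ, ∑ i ∈ S, x j ^ 2 := by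
            rw [Finset.mul_sum]
            exact Finset.sum_congr rfl fun j _ => by simp [Finset.sum_const, hS, mul_comm]
        _ ≤ ∑ j ∈ Sᶜ, ∑ i ∈ S, x i ^ 2 := this
        _ = ((d : ℝ) - k) * ∑ i ∈ S, x i ^ 2 := by
            rw [Finset.sum_const, hSc, nsmul_eq_mul]
            congr 1
            push_cast [Nat.cast_sub hkd]
            ring
    nlinarith [Finset.sum_nonneg (fun i (_ : i ∈ S) => sq_nonneg (x i))]
  refine ⟨?_, by rw [hny, hinner], ?_⟩
  · rw [hnx, hny, div_mul_eq_mul_div, div_le_iff₀ hd, mul_comm (∑ i ∈ S, x i ^ 2)]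
    exact key
  · rw [hinner, hnx]
    apply Finset.sum_le_sum_of_subset_of_nonneg (Finset.subset_univ S)
    intro i _ _; positivity
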